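/- For every wheel W_n of order n ≥ 4, the 2-multigraph ²W_n obtained from W_n by doubling every edge admits a decomposition into at most 2 locally irregular submultigraphs, i.e. lir(²W_n) ≤ 2. -/

import Mathlib

/-- The degree of a vertex `v` in the multigraph given by the symmetric
edge-multiplicity function `μ` : the sum of the multiplicities of the edges at `v`. -/
def mdeg {V : Type*} [Fintype V] (μ : V → V → ℕ) (v : V) : ℕ := ∑ u, μ v u

/-- A multigraph (given by a symmetric edge-multiplicity function `μ`) is locally
irregular if any two vertices adjacent in it (joined by an edge of positive
multiplicity) have distinct degrees. -/
def MulLocIrreg {V : Type*} [Fintype V] (μ : V → V → ℕ) : Prop :=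
  ∀ v w, 0 < μ v w → mdeg μ v ≠ mdeg μ w

/-- `μs` is a decomposition of the 2-multigraph `²G` (obtained from `G` by doubling
every edge) into `k` locally irregular submultigraphs: each `μs i` is a symmetric
multiplicity function supported on the edges of `G`, the multiplicities sum to `2`
on every edge of `G`, and each `μs i` is locally irregular. -/
def IsLirDecomp {V : Type*} [Fintype V] (G : SimpleGraph V) (k : ℕ)
    (μs : Fin k → V → V → ℕ) : Prop :=
  (∀ i v w, μs i v w = μs i w v) ∧
  (∀ i v w, 0 < μs i v w → G.Adj v w) ∧
  (∀ v w, G.Adj v w → ∑ i, μs i v w = 2) ∧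
  (∀ i, MulLocIrreg (μs i))

/-- The wheel of order `m + 1`: a cycle of length `m` (on the vertices `some i`)
together with one central vertex (`none`) joined to all vertices of the cycle. -/
def wheelGraph (m : ℕ) : SimpleGraph (Option (Fin m)) :=
  SimpleGraph.fromRel (fun u v =>
    (u = none ∧ v ≠ none) ∨
    (∃ i j : Fin m, u = some i ∧ v = some j ∧ (SimpleGraph.cycleGraph m).Adj i j))

namespace LirWheel

/-! ### Arithmetic helpers -/

/-- The multiplicity pattern put on the cycle edge `(t, t+1)` in the first part:
essentially `t % 3`, adjusted near the wrap-around when `m % 3 = 2`. -/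
def A (m t : ℕ) : ℕ :=
  if m % 3 = 2 ∧ t = m - 2 then 2
  else if m % 3 = 2 ∧ t = m - 1 then 0
  else t % 3

lemma A_le (m t : ℕ) : A m t ≤ 2 := by
  unfold A; split_ifs <;> omega

/-- successor modulo `m` -/
def sc (m t : ℕ) : ℕ := (t + 1) % m
/-- predecessor modulo `m` -/
def pd (m t : ℕ) : ℕ := if t = 0 then m - 1 else t - 1

lemma sc_eq (m t : ℕ) (hm : 1 ≤ m) (ht : t < m) :
    sc m t = if t + 1 = m then 0 else t + 1 := by
  unfold sc; split_ifs with h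
  · simp [h]
  · exact Nat.mod_eq_of_lt (by omega)

lemma sc_lt (m t : ℕ) (hm : 1 ≤ m) (ht : t < m) : sc m t < m := by
  rw [sc_eq m t hm ht]; split_ifs <;> (first | omega | simp_all)

lemma pd_lt (m t : ℕ) (hm : 1 ≤ m) (ht : t < m) : pd m t < m := by
  unfold pd; split_ifs <;> (first | omega | simp_all)

lemma sc_pd (m t : ℕ) (hm : 1 ≤ m) (ht : t < m) : sc m (pd m t) = t := by
  rw [sc_eq m (pd m t) hm (pd_lt m t hm ht)]
  unfold pd
  split_ifs <;> (first | omega | simp_all)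

lemma pd_sc (m t : ℕ) (hm : 1 ≤ m) (ht : t < m) : pd m (sc m t) = t := by
  rw [sc_eq m t hm ht]; unfold pd; split_ifs <;> (first | omega | simp_all)

lemma sc_ne_self (m t : ℕ) (hm : 2 ≤ m) (ht : t < m) : sc m t ≠ t := by
  rw [sc_eq m t (by omega) ht]; split_ifs <;> (first | omega | simp_all)

lemma sc_ne_pd (m t : ℕ) (hm : 3 ≤ m) (ht : t < m) : sc m t ≠ pd m t := by
  rw [sc_eq m t (by omega) ht]; unfold pd; split_ifs <;> (first | omega | simp_all)

lemma sc_sc_ne (m t : ℕ) (hm : 3 ≤ m) (ht : t < m) : sc m (sc m t) ≠ t := by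
  rw [sc_eq m (sc m t) (by omega) (sc_lt m t (by omega) ht), sc_eq m t (by omega) ht]
  split_ifs <;> (first | omega | simp_all)

/-- Key property: labels of the two cycle edges at any cycle vertex viewed two
apart differ. -/
lemma A_pd_ne_sc (m t : ℕ) (hm : 3 ≤ m) (ht : t < m) :
    A m (pd m t) ≠ A m (sc m t) := by
  rw [sc_eq m t (by omega) ht]
  unfold A pd
  split_ifs <;> (first | omega | simp_all)

/-- The degree of a rim vertex in the first part stays below the hub degree. -/
lemma A_hub (m t : ℕ) (hm : 3 ≤ m) (ht : t < m) :
    2 + (A m t + A m (pd m t)) < 2 * m := by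
  rcases Nat.lt_or_ge m 4 with h4 | h4
  · have hm3 : m = 3 := by omega
    subst hm3
    unfold A pd
    split_ifs <;> (first | omega | simp_all)
  · have h1 := A_le m t
    have h2 := A_le m (pd m t)
    omega

/-! ### The two multiplicity functions -/

/-- First part: both copies of every spoke, plus `A m t` copies of the cycle
edge `(t, t+1)`. -/
def mu0 (m : ℕ) : Option (Fin m) → Option (Fin m) → ℕ
  | none, none => 0
  | none, some _ => 2
  | some _, none => 2
  | some i, some j =>
      if j.val = sc m i.val then A m i.val
      else if i.val = sc m j.val then A m j.val
      else 0

/-- Second part: `2 - A m t` copies of the cycle edge `(t, t+1)`. -/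
def mu1 (m : ℕ) : Option (Fin m) → Option (Fin m) → ℕ
  | some i, some j =>
      if j.val = sc m i.val then 2 - A m i.val
      else if i.val = sc m j.val then 2 - A m j.val
      else 0
  | _, _ => 0

lemma mu0_symm (m : ℕ) (hm : 3 ≤ m) (v w : Option (Fin m)) :
    mu0 m v w = mu0 m w v := by
  match v, w with
  | none, none => rfl
  | none, some j => rfl
  | some i, none => rfl
  | some i, some j =>
    simp only [mu0]
    split_ifs with h1 h2 h3 h4 <;> try rfl
    exact absurd (by rw [← h1, ← h2]) (sc_sc_ne m i.val hm i.isLt)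

lemma mu1_symm (m : ℕ) (hm : 3 ≤ m) (v w : Option (Fin m)) :
    mu1 m v w = mu1 m w v := by
  match v, w with
  | none, none => rfl
  | none, some j => rfl
  | some i, none => rfl
  | some i, some j =>
    simp only [mu1]
    split_ifs with h1 h2 h3 h4 <;> try rfl
    exact absurd (by rw [← h1, ← h2]) (sc_sc_ne m i.val hm i.isLt)

/-! ### Degrees -/

lemma sum_two {m : ℕ} (p q : Fin m) (hpq : p ≠ q) (x y : ℕ) (f : Fin m → ℕ)
    (hf : ∀ j, f j = if j = p then x else if j = q then y else 0) :
    ∑ j, f j = x + y := by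
  have h : ∀ j, f j = (if j = p then x else 0) + (if j = q then y else 0) := by
    intro j; rw [hf j]; split_ifs with h1 h2 <;> simp_all
  rw [Finset.sum_congr rfl (fun j _ => h j), Finset.sum_add_distrib]
  simp

lemma mdeg0_none (m : ℕ) (hm : 3 ≤ m) : mdeg (mu0 m) none = 2 * m := by
  unfold mdeg
  rw [Fintype.sum_option]
  simp [mu0, Finset.card_univ, Nat.mul_comm]

lemma mdeg0_some (m : ℕ) (hm : 3 ≤ m) (i : Fin m) :
    mdeg (mu0 m) (some i) = 2 + (A m i.val + A m (pd m i.val)) := by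
  unfold mdeg
  rw [Fintype.sum_option]
  have hs : ∑ j : Fin m, mu0 m (some i) (some j) = A m i.val + A m (pd m i.val) := by
    apply sum_two ⟨sc m i.val, sc_lt m i.val (by omega) i.isLt⟩
      ⟨pd m i.val, pd_lt m i.val (by omega) i.isLt⟩
      (by simp only [ne_eq, Fin.mk.injEq]; exact sc_ne_pd m i.val hm i.isLt)
    intro j
    simp only [mu0, Fin.ext_iff]
    by_cases h1 : j.val = sc m i.val
    · rw [if_pos h1, if_pos h1]
    · by_cases h2 : j.val = pd m i.val
      · have h3 : i.val = sc m j.val := by rw [h2, sc_pd m i.val (by omega) i.isLt]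
        rw [if_neg h1, if_pos h3, if_neg h1, if_pos h2, h2]
      · have h3 : ¬ i.val = sc m j.val := by
          intro h
          exact h2 (by rw [← pd_sc m j.val (by omega) j.isLt, ← h])
        rw [if_neg h1, if_neg h3, if_neg h1, if_neg h2]
  rw [hs]
  have h0 : mu0 m (some i) none = 2 := rfl
  omega

lemma mdeg1_some (m : ℕ) (hm : 3 ≤ m) (i : Fin m) :
    mdeg (mu1 m) (some i) = (2 - A m i.val) + (2 - A m (pd m i.val)) := by
  unfold mdeg
  rw [Fintype.sum_option]
  have hs : ∑ j : Fin m, mu1 m (some i) (some j)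
      = (2 - A m i.val) + (2 - A m (pd m i.val)) := by
    apply sum_two ⟨sc m i.val, sc_lt m i.val (by omega) i.isLt⟩
      ⟨pd m i.val, pd_lt m i.val (by omega) i.isLt⟩
      (by simp only [ne_eq, Fin.mk.injEq]; exact sc_ne_pd m i.val hm i.isLt)
    intro j
    simp only [mu1, Fin.ext_iff]
    by_cases h1 : j.val = sc m i.val
    · rw [if_pos h1, if_pos h1]
    · by_cases h2 : j.val = pd m i.val
      · have h3 : i.val = sc m j.val := by rw [h2, sc_pd m i.val (by omega) i.isLt]
        rw [if_neg h1, if_pos h3, if_neg h1, if_pos h2, h2]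
      · have h3 : ¬ i.val = sc m j.val := by
          intro h
          exact h2 (by rw [← pd_sc m j.val (by omega) j.isLt, ← h])
        rw [if_neg h1, if_neg h3, if_neg h1, if_neg h2]
  rw [hs]
  have h0 : mu1 m (some i) none = 0 := rfl
  omega

/-! ### Adjacency bridges -/

lemma val_add_one (k : ℕ) (i : Fin (k + 3)) :
    ((i + 1 : Fin (k + 3))).val = sc (k + 3) i.val := by
  simp [Fin.add_def, sc]

lemma cyc_adj_succ (k : ℕ) (i : Fin (k + 3)) :
    (SimpleGraph.cycleGraph (k + 3)).Adj i (i + 1) := by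
  rw [show k + 3 = (k + 1) + 2 by omega] at *
  rw [SimpleGraph.cycleGraph_adj]
  right; rw [add_sub_cancel_left]

lemma succ_of_cyc_adj (k : ℕ) (i j : Fin (k + 3))
    (h : (SimpleGraph.cycleGraph (k + 3)).Adj i j) :
    j.val = sc (k + 3) i.val ∨ i.val = sc (k + 3) j.val := by
  have h' : j = i + 1 ∨ i = j + 1 := by
    rw [show k + 3 = (k + 1) + 2 by omega] at *
    rw [SimpleGraph.cycleGraph_adj] at h
    rcases h with h | h
    · right; rw [← h, add_sub_cancel]
    · left; rw [← h, add_sub_cancel]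
  rcases h' with h' | h'
  · left; rw [h', val_add_one]
  · right; rw [h', val_add_one]

lemma adj_hub (k : ℕ) (j : Fin (k + 3)) :
    (wheelGraph (k + 3)).Adj none (some j) := by
  rw [wheelGraph, SimpleGraph.fromRel_adj]
  exact ⟨by simp, Or.inl (Or.inl ⟨rfl, by simp⟩)⟩

lemma adj_ring (k : ℕ) (i j : Fin (k + 3)) (h : j.val = sc (k + 3) i.val) :
    (wheelGraph (k + 3)).Adj (some i) (some j) := by
  have hij : j = i + 1 := Fin.ext (by rw [h, val_add_one])
  rw [wheelGraph, SimpleGraph.fromRel_adj]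
  refine ⟨?_, Or.inl (Or.inr ⟨i, j, rfl, rfl, hij ▸ cyc_adj_succ k i⟩)⟩
  simp only [ne_eq, Option.some.injEq]
  intro he
  exact sc_ne_self (k + 3) i.val (by omega) i.isLt (by rw [← h, ← he])

lemma ring_of_adj (k : ℕ) (i j : Fin (k + 3))
    (h : (wheelGraph (k + 3)).Adj (some i) (some j)) :
    j.val = sc (k + 3) i.val ∨ i.val = sc (k + 3) j.val := by
  rw [wheelGraph, SimpleGraph.fromRel_adj] at h
  obtain ⟨hne, hrel⟩ := h
  have hc : (SimpleGraph.cycleGraph (k + 3)).Adj i j := by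
    rcases hrel with (⟨h', -⟩ | ⟨a, b, ha, hb, hadj⟩) | (⟨h', -⟩ | ⟨a, b, ha, hb, hadj⟩)
    · exact absurd h' (by simp)
    · obtain rfl : a = i := by simpa using ha.symm
      obtain rfl : b = j := by simpa using hb.symm
      exact hadj
    · exact absurd h' (by simp)
    · obtain rfl : a = j := by simpa using ha.symm
      obtain rfl : b = i := by simpa using hb.symm
      exact hadj.symm
  exact succ_of_cyc_adj k i j hc

/-! ### The main construction -/

lemma main (k : ℕ) :
    ∃ μs : Fin 2 → Option (Fin (k + 3)) → Option (Fin (k + 3)) → ℕ,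
      IsLirDecomp (wheelGraph (k + 3)) 2 μs := by
  have hm : 3 ≤ k + 3 := by omega
  refine ⟨![mu0 (k + 3), mu1 (k + 3)], ?_, ?_, ?_, ?_⟩
  · -- symmetry
    intro i v w
    fin_cases i <;>
      simp only [Fin.zero_eta, Fin.mk_one, Fin.isValue, Matrix.cons_val_zero, Matrix.cons_val_one, Matrix.head_cons]
    · exact mu0_symm _ hm v w
    · exact mu1_symm _ hm v w
  · -- support
    intro i v w hpos
    fin_cases i <;>
      simp only [Fin.zero_eta, Fin.mk_one, Fin.isValue, Matrix.cons_val_zero, Matrix.cons_val_one, Matrix.head_cons] at hpos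
    · match v, w with
      | none, none => exact absurd hpos (by norm_num [mu0])
      | none, some j => exact adj_hub k j
      | some i, none => exact (adj_hub k i).symm
      | some i, some j =>
        by_cases h1 : j.val = sc (k + 3) i.val
        · exact adj_ring k i j h1
        · by_cases h2 : i.val = sc (k + 3) j.val
          · exact (adj_ring k j i h2).symm
          · exfalso
            have h0 : mu0 (k + 3) (some i) (some j) = 0 := by
              simp only [mu0]; rw [if_neg h1, if_neg h2]
            omega
    · match v, w with
      | none, none => exact absurd hpos (by norm_num [mu1])
      | none, some j => exact absurd hpos (by norm_num [mu1])
      | some i, none => exact absurd hpos (by norm_num [mu1])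
      | some i, some j =>
        by_cases h1 : j.val = sc (k + 3) i.val
        · exact adj_ring k i j h1
        · by_cases h2 : i.val = sc (k + 3) j.val
          · exact (adj_ring k j i h2).symm
          · exfalso
            have h0 : mu1 (k + 3) (some i) (some j) = 0 := by
              simp only [mu1]; rw [if_neg h1, if_neg h2]
            omega
  · -- edge multiplicities sum to 2
    intro v w hadj
    rw [Fin.sum_univ_two]
    simp only [Fin.zero_eta, Fin.mk_one, Fin.isValue, Matrix.cons_val_zero, Matrix.cons_val_one, Matrix.head_cons]
    match v, w with
    | none, none => exact absurd rfl hadj.ne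
    | none, some j => rfl
    | some i, none => rfl
    | some i, some j =>
      have hor := ring_of_adj k i j hadj
      by_cases h1 : j.val = sc (k + 3) i.val
      · have ha := A_le (k + 3) i.val
        simp only [mu0, mu1]
        rw [if_pos h1, if_pos h1]
        omega
      · have h2 := hor.resolve_left h1
        have ha := A_le (k + 3) j.val
        simp only [mu0, mu1]
        rw [if_neg h1, if_pos h2, if_neg h1, if_pos h2]
        omega
  · -- local irregularity
    intro idx
    fin_cases idx <;>
      simp only [Fin.zero_eta, Fin.mk_one, Fin.isValue, Matrix.cons_val_zero, Matrix.cons_val_one, Matrix.head_cons] <;>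
      intro v w hpos
    · -- mu0
      match v, w with
      | none, none => exact absurd hpos (by norm_num [mu0])
      | none, some j =>
        rw [mdeg0_none _ hm, mdeg0_some _ hm]
        have := A_hub (k + 3) j.val hm j.isLt
        omega
      | some i, none =>
        rw [mdeg0_none _ hm, mdeg0_some _ hm]
        have := A_hub (k + 3) i.val hm i.isLt
        omega
      | some i, some j =>
        rw [mdeg0_some _ hm i, mdeg0_some _ hm j]
        by_cases h1 : j.val = sc (k + 3) i.val
        · rw [h1, pd_sc (k + 3) i.val (by omega) i.isLt]
          have := A_pd_ne_sc (k + 3) i.val hm i.isLt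
          omega
        · by_cases h2 : i.val = sc (k + 3) j.val
          · rw [h2, pd_sc (k + 3) j.val (by omega) j.isLt]
            have := A_pd_ne_sc (k + 3) j.val hm j.isLt
            omega
          · exfalso
            have h0 : mu0 (k + 3) (some i) (some j) = 0 := by
              simp only [mu0]; rw [if_neg h1, if_neg h2]
            omega
    · -- mu1
      match v, w with
      | none, none => exact absurd hpos (by norm_num [mu1])
      | none, some j => exact absurd hpos (by norm_num [mu1])
      | some i, none => exact absurd hpos (by norm_num [mu1])
      | some i, some j =>
        rw [mdeg1_some _ hm i, mdeg1_some _ hm j]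
        by_cases h1 : j.val = sc (k + 3) i.val
        · rw [h1, pd_sc (k + 3) i.val (by omega) i.isLt]
          have hne := A_pd_ne_sc (k + 3) i.val hm i.isLt
          have ha := A_le (k + 3) i.val
          have hb := A_le (k + 3) (pd (k + 3) i.val)
          have hc := A_le (k + 3) (sc (k + 3) i.val)
          omega
        · by_cases h2 : i.val = sc (k + 3) j.val
          · rw [h2, pd_sc (k + 3) j.val (by omega) j.isLt]
            have hne := A_pd_ne_sc (k + 3) j.val hm j.isLt
            have ha := A_le (k + 3) j.val
            have hb := A_le (k + 3) (pd (k + 3) j.val)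
            have hc := A_le (k + 3) (sc (k + 3) j.val)
            omega
          · exfalso
            have h0 : mu1 (k + 3) (some i) (some j) = 0 := by
              simp only [mu1]; rw [if_neg h1, if_neg h2]
            omega

end LirWheel

/-- For every wheel `W n` of order `n ≥ 4` (a cycle of length `n - 1` plus a central
vertex joined to all cycle vertices), the 2-multigraph `²Wₙ` obtained by doubling
every edge decomposes into at most 2 locally irregular submultigraphs. -/
theorem lir_doubled_wheel_le_two (n : ℕ) (hn : 4 ≤ n) :
    ∃ μs : Fin 2 → Option (Fin (n - 1)) → Option (Fin (n - 1)) → ℕ,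
      IsLirDecomp (wheelGraph (n - 1)) 2 μs := by
  obtain ⟨k, hk⟩ : ∃ k, n - 1 = k + 3 := ⟨n - 4, by omega⟩
  rw [hk]
  exact LirWheel.main k
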